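/- For $\|\boldsymbol{\omega}\| > k_b$, the truncated Green function's Fourier transform satisfies the bound $|\widehat{g_t}(\boldsymbol{\omega})| \le \frac{2}{(\|\boldsymbol{\omega}\| - k_b)\|\boldsymbol{\omega}\|}$, where $\widehat{g_t}(\boldsymbol{\omega}) = \frac{1}{\|\boldsymbol{\omega}\|^2 - k_b^2}\left(1 - e^{j R k_b}(\cos(R\|\boldsymbol{\omega}\|) + j k_b R\,\mathrm{sinc}(R\|\boldsymbol{\omega}\|))\right)$ and $R = \sqrt{3}L$ with $k_b R \cdot \mathrm{sinc}(R\|\boldsymbol{\omega}\|) \le k_b/\|\boldsymbol{\omega}\| \le 1$. -/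

import Mathlib

open Complex

noncomputable def sinc (x : ℝ) : ℝ := if x = 0 then 1 else Real.sin x / x

/-- bound on the Fourier transform of the truncated Green function
outside the ball of radius k_b. -/
theorem truncated_green_fourier_bound
    (L kb : ℝ) (hL : 0 < L) (hkb : 0 < kb)
    (R : ℝ) (hR : R = Real.sqrt 3 * L)
    (ghat : EuclideanSpace ℝ (Fin 3) → ℂ)
    (hghat : ∀ ω : EuclideanSpace ℝ (Fin 3),
      ghat ω = (1 / ((‖ω‖ ^ 2 - kb ^ 2 : ℝ) : ℂ)) *
        (1 - Complex.exp (Complex.I * (R : ℂ) * (kb : ℂ)) *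
          (((Real.cos (R * ‖ω‖) : ℝ) : ℂ) +
            Complex.I * (kb : ℂ) * (R : ℂ) * ((sinc (R * ‖ω‖) : ℝ) : ℂ)))) :
    ∀ ω : EuclideanSpace ℝ (Fin 3), kb < ‖ω‖ →
      ‖ghat ω‖ ≤ 2 / ((‖ω‖ - kb) * ‖ω‖) := by
  intro ω hω
  have hR0 : 0 < R := by
    rw [hR]; positivity
  set t : ℝ := ‖ω‖ with htdef
  have ht0 : 0 < t := lt_trans hkb hω
  have hRt : R * t ≠ 0 := by positivity
  have hsinc : sinc (R * t) = Real.sin (R * t) / (R * t) := by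
    rw [sinc, if_neg hRt]
  -- the factor c + i a has modulus ≤ 1
  have ha : kb * R * sinc (R * t) = (kb / t) * Real.sin (R * t) := by
    rw [hsinc]; field_simp
  have hfac : ‖(((Real.cos (R * t) : ℝ) : ℂ) +
      Complex.I * (kb : ℂ) * (R : ℂ) * ((sinc (R * t) : ℝ) : ℂ))‖ ≤ 1 := by
    have heq : (((Real.cos (R * t) : ℝ) : ℂ) +
        Complex.I * (kb : ℂ) * (R : ℂ) * ((sinc (R * t) : ℝ) : ℂ)) =
        Complex.mk (Real.cos (R * t)) (kb * R * sinc (R * t)) := by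
      apply Complex.ext <;>
        simp [Complex.ext_iff, -Complex.ofReal_cos, Complex.mul_re, Complex.mul_im] <;> ring
    rw [heq, Complex.norm_def, Complex.normSq_mk]
    have hle : Real.cos (R * t) * Real.cos (R * t) +
        kb * R * sinc (R * t) * (kb * R * sinc (R * t)) ≤ 1 := by
      rw [ha]
      have hs := Real.sin_sq_add_cos_sq (R * t)
      have hkt : (kb / t) ^ 2 ≤ 1 := by
        rw [sq_le_one_iff_abs_le_one, abs_div, abs_of_pos hkb, abs_of_pos ht0,
          div_le_one ht0]
        exact hω.le
      nlinarith [sq_nonneg (Real.sin (R * t))]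
    calc Real.sqrt _ ≤ Real.sqrt 1 := Real.sqrt_le_sqrt hle
      _ = 1 := Real.sqrt_one
  have hexp : ‖Complex.exp (Complex.I * (R : ℂ) * (kb : ℂ))‖ = 1 := by
    rw [Complex.norm_exp]
    simp [Complex.mul_re]
  have hbr : ‖(1 : ℂ) - Complex.exp (Complex.I * (R : ℂ) * (kb : ℂ)) *
      (((Real.cos (R * t) : ℝ) : ℂ) +
        Complex.I * (kb : ℂ) * (R : ℂ) * ((sinc (R * t) : ℝ) : ℂ))‖ ≤ 2 := by
    calc _ ≤ ‖(1:ℂ)‖ + ‖Complex.exp (Complex.I * (R : ℂ) * (kb : ℂ)) *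
        (((Real.cos (R * t) : ℝ) : ℂ) +
          Complex.I * (kb : ℂ) * (R : ℂ) * ((sinc (R * t) : ℝ) : ℂ))‖ :=
        norm_sub_le _ _
      _ ≤ 1 + 1 * 1 := by
          rw [norm_mul, hexp, norm_one]
          gcongr
      _ = 2 := by norm_num
  have hden : (0:ℝ) < t ^ 2 - kb ^ 2 := by nlinarith
  have hnorm1 : ‖(1 / ((t ^ 2 - kb ^ 2 : ℝ) : ℂ))‖ = 1 / (t ^ 2 - kb ^ 2) := by
    rw [norm_div, norm_one, Complex.norm_real, Real.norm_of_nonneg hden.le]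
  have key : ‖ghat ω‖ ≤ 2 / (t ^ 2 - kb ^ 2) := by
    rw [hghat ω, norm_mul, hnorm1]
    calc 1 / (t ^ 2 - kb ^ 2) * ‖_‖ ≤ 1 / (t ^ 2 - kb ^ 2) * 2 := by
          exact mul_le_mul_of_nonneg_left hbr (by positivity)
      _ = 2 / (t ^ 2 - kb ^ 2) := by ring
  refine key.trans ?_
  apply div_le_div_of_nonneg_left (by norm_num) (by nlinarith)
  nlinarith
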